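/- For finite sets A, B, C over a common type, the Jaccard distance d(A, B) = 1 − |A ∩ B| / |A ∪ B| satisfies the triangle inequality: d(A, C) ≤ d(A, B) + d(B, C), where d(∅, ∅) = 0. -/
import Mathlib

set_option maxHeartbeats 1600000


/-- The Jaccard distance `d(A, B) = 1 − |A ∩ B| / |A ∪ B|` (with `d(∅, ∅) = 0`)
satisfies the triangle inequality. -/
theorem jaccard_distance_triangle
    {α : Type*} [DecidableEq α]
    (d : Finset α → Finset α → ℚ)
    (hd : ∀ A B : Finset α,
      d A B = if A ∪ B = ∅ then 0
        else 1 - ((A ∩ B).card : ℚ) / ((A ∪ B).card : ℚ)) :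
    ∀ A B C : Finset α, d A C ≤ d A B + d B C := by
  have hnn : ∀ X Y : Finset α, 0 ≤ d X Y := by
    intro X Y
    rw [hd]
    split
    · exact le_refl _
    · rename_i h
      have hpos : (0:ℚ) < ((X ∪ Y).card : ℚ) := by
        exact_mod_cast Finset.card_pos.mpr (Finset.nonempty_iff_ne_empty.mpr h)
      have hle : (((X ∩ Y).card : ℚ)) ≤ ((X ∪ Y).card : ℚ) := by
        exact_mod_cast Finset.card_le_card (Finset.inter_subset_union)
      have h1 : ((X ∩ Y).card : ℚ) / ((X ∪ Y).card : ℚ) ≤ 1 := by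
        rw [div_le_one hpos]; exact hle
      linarith
  intro A B C
  by_cases hAC : A ∪ C = ∅
  · rw [hd A C, if_pos hAC]
    exact add_nonneg (hnn A B) (hnn B C)
  by_cases hAB : A ∪ B = ∅
  · obtain ⟨hA, hB⟩ := Finset.union_eq_empty.mp hAB
    have : d B C = d A C := by rw [hA, hB]
    rw [this, hd A B, if_pos hAB, zero_add]
  by_cases hBC : B ∪ C = ∅
  · obtain ⟨hB, hC⟩ := Finset.union_eq_empty.mp hBC
    have : d A B = d A C := by rw [hB, hC]
    rw [hd B C, if_pos hBC, this, add_zero]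
  -- main case: all unions nonempty
  set a := (A \ (B ∪ C)).card with ha
  set b := (B \ (A ∪ C)).card with hb
  set c := (C \ (A ∪ B)).card with hc
  set p := ((A ∩ B) \ C).card with hp
  set q := ((A ∩ C) \ B).card with hq
  set r := ((B ∩ C) \ A).card with hr
  set s := (A ∩ B ∩ C).card with hs
  -- region set equalities
  have e1 : (A ∩ C) ∩ B = A ∩ B ∩ C := by ext x; simp only [Finset.mem_inter]; tauto
  have e2 : (B ∩ C) ∩ A = A ∩ B ∩ C := by ext x; simp only [Finset.mem_inter]; tauto
  have e3 : (A \ B) ∩ C = (A ∩ C) \ B := by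
    ext x; simp only [Finset.mem_inter, Finset.mem_sdiff]; tauto
  have e4 : (A \ B) \ C = A \ (B ∪ C) := by
    ext x; simp only [Finset.mem_sdiff, Finset.mem_union]; tauto
  have e5 : (B \ A) ∩ C = (B ∩ C) \ A := by
    ext x; simp only [Finset.mem_inter, Finset.mem_sdiff]; tauto
  have e6 : (B \ A) \ C = B \ (A ∪ C) := by
    ext x; simp only [Finset.mem_sdiff, Finset.mem_union]; tauto
  have e7 : (C \ A) ∩ B = (B ∩ C) \ A := by
    ext x; simp only [Finset.mem_inter, Finset.mem_sdiff]; tauto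
  have e8 : (C \ A) \ B = C \ (A ∪ B) := by
    ext x; simp only [Finset.mem_sdiff, Finset.mem_union]; tauto
  -- card identities
  have hIAB : (A ∩ B).card = s + p := by
    have := Finset.card_inter_add_card_sdiff (A ∩ B) C
    omega
  have hIAC : (A ∩ C).card = s + q := by
    have := Finset.card_inter_add_card_sdiff (A ∩ C) B
    rw [e1] at this
    omega
  have hIBC : (B ∩ C).card = s + r := by
    have := Finset.card_inter_add_card_sdiff (B ∩ C) A
    rw [e2] at this
    omega
  have hAcard : A.card = a + p + q + s := by
    have h1 := Finset.card_inter_add_card_sdiff A B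
    have h2 := Finset.card_inter_add_card_sdiff (A \ B) C
    rw [e3, e4] at h2
    omega
  have hBcard : B.card = b + p + r + s := by
    have h1 := Finset.card_inter_add_card_sdiff B A
    have h2 := Finset.card_inter_add_card_sdiff (B \ A) C
    rw [e5, e6] at h2
    have h3 : (B ∩ A).card = (A ∩ B).card := by rw [Finset.inter_comm]
    omega
  have hCcard : C.card = c + q + r + s := by
    have h1 := Finset.card_inter_add_card_sdiff C A
    have h2 := Finset.card_inter_add_card_sdiff (C \ A) B
    rw [e7, e8] at h2
    have h3 : (C ∩ A).card = (A ∩ C).card := by rw [Finset.inter_comm]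
    omega
  have hUAC : (A ∪ C).card = a + c + p + q + r + s := by
    have := Finset.card_union_add_card_inter A C
    omega
  have hUAB : (A ∪ B).card = a + b + p + q + r + s := by
    have := Finset.card_union_add_card_inter A B
    omega
  have hUBC : (B ∪ C).card = b + c + p + q + r + s := by
    have := Finset.card_union_add_card_inter B C
    omega
  have hu1 : 0 < (A ∪ C).card := Finset.card_pos.mpr (Finset.nonempty_iff_ne_empty.mpr hAC)
  have hu2 : 0 < (A ∪ B).card := Finset.card_pos.mpr (Finset.nonempty_iff_ne_empty.mpr hAB)
  have hu3 : 0 < (B ∪ C).card := Finset.card_pos.mpr (Finset.nonempty_iff_ne_empty.mpr hBC)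
  rw [hd A C, hd A B, hd B C, if_neg hAC, if_neg hAB, if_neg hBC,
    hIAC, hIAB, hIBC, hUAC, hUAB, hUBC]
  have hv1 : (0:ℚ) < ((a:ℚ) + c + p + q + r + s) := by
    have : 0 < a + c + p + q + r + s := by omega
    exact_mod_cast this
  have hv2 : (0:ℚ) < ((a:ℚ) + b + p + q + r + s) := by
    have : 0 < a + b + p + q + r + s := by omega
    exact_mod_cast this
  have hv3 : (0:ℚ) < ((b:ℚ) + c + p + q + r + s) := by
    have : 0 < b + c + p + q + r + s := by omega
    exact_mod_cast this
  push_cast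
  have hE : (0:ℚ) ≤ (2*q*s*s + 4*q*r*s + 2*q*r*r + 4*q*q*s + 4*q*q*r + 2*q*q*q + 4*p*q*s + 4*p*q*r
          + 4*p*q*q + 2*p*p*q + c*r*s + c*r*r + 3*c*q*s + 4*c*q*r + 3*c*q*q + c*p*r
          + 3*c*p*q + c*c*r + c*c*q + 2*b*s*s + 3*b*r*s + b*r*r + 6*b*q*s + 5*b*q*r
          + 4*b*q*q + 3*b*p*s + 2*b*p*r + 5*b*p*q + b*p*p + 2*b*c*s + 2*b*c*r + 4*b*c*q
          + 2*b*c*p + b*c*c + 2*b*b*s + b*b*r + 2*b*b*q + b*b*p + b*b*c + 3*a*q*s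
          + 3*a*q*r + 3*a*q*q + a*p*s + a*p*r + 4*a*p*q + a*p*p + 2*a*c*s + 2*a*c*r
          + 4*a*c*q + 2*a*c*p + a*c*c + 2*a*b*s + 2*a*b*r + 4*a*b*q + 2*a*b*p + 2*a*b*c
          + a*b*b + a*a*q + a*a*p + a*a*c + a*a*b : ℚ) := by
    have h : (0:ℚ) ≤ ((2*q*s*s + 4*q*r*s + 2*q*r*r + 4*q*q*s + 4*q*q*r + 2*q*q*q + 4*p*q*s + 4*p*q*r
          + 4*p*q*q + 2*p*p*q + c*r*s + c*r*r + 3*c*q*s + 4*c*q*r + 3*c*q*q + c*p*r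
          + 3*c*p*q + c*c*r + c*c*q + 2*b*s*s + 3*b*r*s + b*r*r + 6*b*q*s + 5*b*q*r
          + 4*b*q*q + 3*b*p*s + 2*b*p*r + 5*b*p*q + b*p*p + 2*b*c*s + 2*b*c*r + 4*b*c*q
          + 2*b*c*p + b*c*c + 2*b*b*s + b*b*r + 2*b*b*q + b*b*p + b*b*c + 3*a*q*s
          + 3*a*q*r + 3*a*q*q + a*p*s + a*p*r + 4*a*p*q + a*p*p + 2*a*c*s + 2*a*c*r
          + 4*a*c*q + 2*a*c*p + a*c*c + 2*a*b*s + 2*a*b*r + 4*a*b*q + 2*a*b*p + 2*a*b*c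
          + a*b*b + a*a*q + a*a*p + a*a*c + a*a*b : ℕ) : ℚ) := Nat.cast_nonneg _
    push_cast at h
    linarith [h]
  have key : ((s:ℚ) + p) / ((a:ℚ) + b + p + q + r + s)
      + ((s:ℚ) + r) / ((b:ℚ) + c + p + q + r + s)
      ≤ 1 + ((s:ℚ) + q) / ((a:ℚ) + c + p + q + r + s) := by
    rw [div_add_div _ _ hv2.ne' hv3.ne',
      show (1:ℚ) + ((s:ℚ) + q) / ((a:ℚ) + c + p + q + r + s)
        = (((a:ℚ) + c + p + q + r + s) + ((s:ℚ) + q)) / ((a:ℚ) + c + p + q + r + s) from by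
          field_simp,
      div_le_div_iff₀ (by positivity) hv1]
    nlinarith [hE]
  linarith [key]
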